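/- Let p ∈ (1, 2) and ε > 0, and define ν_ε(y) := (|y|² + ε²)^{1/2} for y ∈ ℝ^d. Then for all x, u ∈ ℝ^d one has ν_ε(x+u)^p − ν_ε(x)^p − p ν_ε(x)^{p−2} ⟨x, u⟩ ≥ (p(p−1)/2) |u|² (max(|x|, |x+u|)² + ε²)^{(p−2)/2}. -/

import Mathlib

open scoped RealInnerProductSpace

/-- Regularized key inequality from the proof of Lemma 3.5: for `p ∈ (1, 2)`,
`ε > 0`, `ν_ε(y) = (|y|² + ε²)^(1/2)` and all `x, u ∈ ℝ^d`,
`ν_ε(x+u)^p - ν_ε(x)^p - p ν_ε(x)^(p-2)⟨x,u⟩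
  ≥ (p(p-1)/2)|u|² (max(|x|,|x+u|)² + ε²)^((p-2)/2)`. -/
theorem nu_eps_key_inequality
    (p : ℝ) (hp1 : 1 < p) (hp2 : p < 2) (ε : ℝ) (hε : 0 < ε) (d : ℕ)
    (x u : EuclideanSpace ℝ (Fin d)) :
    p * (p - 1) / 2 * ‖u‖ ^ 2 *
        ((max ‖x‖ ‖x + u‖) ^ 2 + ε ^ 2) ^ ((p - 2) / 2) ≤
      Real.sqrt (‖x + u‖ ^ 2 + ε ^ 2) ^ p - Real.sqrt (‖x‖ ^ 2 + ε ^ 2) ^ p -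
        p * Real.sqrt (‖x‖ ^ 2 + ε ^ 2) ^ (p - 2) * ⟪x, u⟫ := by
  set M : ℝ := max ‖x‖ ‖x + u‖ with hM
  set q : ℝ := p / 2 with hq
  set g : ℝ → ℝ := fun t => ‖x‖ ^ 2 + 2 * t * ⟪x, u⟫ + t ^ 2 * ‖u‖ ^ 2 + ε ^ 2 with hgdef
  have hgform : ∀ t : ℝ, g t = ‖x + t • u‖ ^ 2 + ε ^ 2 := by
    intro t
    have h1 : ‖x + t • u‖ ^ 2 = ‖x‖ ^ 2 + 2 * ⟪x, t • u⟫ + ‖t • u‖ ^ 2 :=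
      norm_add_sq_real x (t • u)
    rw [h1, real_inner_smul_right, norm_smul]
    simp only [hgdef, Real.norm_eq_abs, mul_pow, sq_abs]
    ring
  have hgpos : ∀ t, 0 < g t := fun t => by
    rw [hgform t]; positivity
  have hg' : ∀ t : ℝ, HasDerivAt g (2 * ⟪x, u⟫ + 2 * t * ‖u‖ ^ 2) t := by
    intro t
    have h1 : HasDerivAt (fun t : ℝ => 2 * t * ⟪x, u⟫) (2 * ⟪x, u⟫) t := by
      simpa using ((hasDerivAt_id t).const_mul 2).mul_const ⟪x, u⟫
    have h2 : HasDerivAt (fun t : ℝ => t ^ 2 * ‖u‖ ^ 2) (2 * t * ‖u‖ ^ 2) t := by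
      have := (hasDerivAt_pow 2 t).mul_const (‖u‖ ^ 2)
      simpa using this
    have := (((hasDerivAt_const t (‖x‖ ^ 2)).add h1).add h2).add_const (ε ^ 2)
    simpa [hgdef] using this
  set f : ℝ → ℝ := fun t => g t ^ q with hfdef
  set f1 : ℝ → ℝ := fun t => q * g t ^ (q - 1) * (2 * ⟪x, u⟫ + 2 * t * ‖u‖ ^ 2) with hf1def
  have hfd : ∀ t, HasDerivAt f (f1 t) t := by
    intro t
    have := (hg' t).rpow_const (p := q) (Or.inl (hgpos t).ne')
    convert this using 1
    simp only [hf1def]; ring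
  set f2 : ℝ → ℝ := fun t =>
    q * (((2 * ⟪x, u⟫ + 2 * t * ‖u‖ ^ 2) * (q - 1) * g t ^ (q - 1 - 1)) *
        (2 * ⟪x, u⟫ + 2 * t * ‖u‖ ^ 2) + g t ^ (q - 1) * (2 * ‖u‖ ^ 2)) with hf2def
  have hf1d : ∀ t, HasDerivAt f1 (f2 t) t := by
    intro t
    have hA : HasDerivAt (fun t => g t ^ (q - 1))
        ((2 * ⟪x, u⟫ + 2 * t * ‖u‖ ^ 2) * (q - 1) * g t ^ (q - 1 - 1)) t :=
      (hg' t).rpow_const (Or.inl (hgpos t).ne')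
    have hL : HasDerivAt (fun t : ℝ => 2 * ⟪x, u⟫ + 2 * t * ‖u‖ ^ 2) (2 * ‖u‖ ^ 2) t := by
      have : HasDerivAt (fun t : ℝ => 2 * t * ‖u‖ ^ 2) (2 * ‖u‖ ^ 2) t := by
        simpa using (((hasDerivAt_id t).const_mul 2).mul_const (‖u‖ ^ 2))
      exact this.const_add (2 * ⟪x, u⟫)
    have := ((hA.mul hL).const_mul q)
    have hfun : f1 = fun s => q * (g s ^ (q - 1) * (2 * ⟪x, u⟫ + 2 * s * ‖u‖ ^ 2)) := by
      simp only [hf1def]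
      ext s
      ring
    rw [hfun]; exact this
  set C : ℝ := p * (p - 1) * ‖u‖ ^ 2 * (M ^ 2 + ε ^ 2) ^ (q - 1) with hCdef
  -- key second-derivative bound
  have key : ∀ t ∈ Set.Icc (0 : ℝ) 1, C ≤ f2 t := by
    intro t ht
    have hs : 0 < g t := hgpos t
    set a : ℝ := ⟪x, u⟫ + t * ‖u‖ ^ 2 with hadef
    have ha : a = ⟪x + t • u, u⟫ := by
      rw [inner_add_left, real_inner_smul_left, real_inner_self_eq_norm_sq]
    have ha2 : a ^ 2 ≤ g t * ‖u‖ ^ 2 := by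
      have hcs : ⟪x + t • u, u⟫ * ⟪x + t • u, u⟫ ≤
          ⟪x + t • u, x + t • u⟫ * ⟪u, u⟫ := real_inner_mul_inner_self_le _ _
      rw [real_inner_self_eq_norm_sq, real_inner_self_eq_norm_sq] at hcs
      have : ‖x + t • u‖ ^ 2 ≤ g t := by rw [hgform t]; nlinarith [sq_nonneg ε]
      calc a ^ 2 = ⟪x + t • u, u⟫ * ⟪x + t • u, u⟫ := by rw [ha]; ring
        _ ≤ ‖x + t • u‖ ^ 2 * ‖u‖ ^ 2 := hcs
        _ ≤ g t * ‖u‖ ^ 2 := by nlinarith [sq_nonneg ‖u‖]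
    have hsle : g t ≤ M ^ 2 + ε ^ 2 := by
      rw [hgform t]
      have hle : ‖x + t • u‖ ≤ M := by
        have hrw : x + t • u = (1 - t) • x + t • (x + u) := by
          rw [smul_add, sub_smul, one_smul]; abel
        calc ‖x + t • u‖ = ‖(1 - t) • x + t • (x + u)‖ := by rw [hrw]
          _ ≤ ‖(1 - t) • x‖ + ‖t • (x + u)‖ := norm_add_le _ _
          _ = (1 - t) * ‖x‖ + t * ‖x + u‖ := by
              rw [norm_smul, norm_smul, Real.norm_eq_abs, Real.norm_eq_abs,
                abs_of_nonneg (by linarith [ht.2] : (0:ℝ) ≤ 1 - t),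
                abs_of_nonneg ht.1]
          _ ≤ (1 - t) * M + t * M := by
              have hx1 : ‖x‖ ≤ M := le_max_left _ _
              have hx2 : ‖x + u‖ ≤ M := le_max_right _ _
              nlinarith [ht.1, ht.2]
          _ = M := by ring
      have hM0 : 0 ≤ M := le_trans (norm_nonneg x) (le_max_left _ _)
      nlinarith [hle, norm_nonneg (x + t • u)]
    -- rewrite f2
    have hsplit : g t ^ (q - 1) = g t ^ (q - 1 - 1) * g t := by
      rw [← Real.rpow_add_one hs.ne' (q - 1 - 1)]
      ring_nf
    have hf2eq : f2 t = p * g t ^ (q - 1 - 1) * ((p - 2) * a ^ 2 + g t * ‖u‖ ^ 2) := by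
      simp only [hf2def, hadef]
      rw [hsplit, hq]
      ring
    have hinner : (p - 1) * (g t * ‖u‖ ^ 2) ≤ (p - 2) * a ^ 2 + g t * ‖u‖ ^ 2 := by
      nlinarith [ha2]
    have hpow : (M ^ 2 + ε ^ 2) ^ (q - 1) ≤ g t ^ (q - 1) := by
      apply Real.rpow_le_rpow_of_nonpos hs hsle
      rw [hq]; linarith
    calc C ≤ p * (p - 1) * ‖u‖ ^ 2 * g t ^ (q - 1) := by
          rw [hCdef]
          have hc : (0:ℝ) ≤ p * (p - 1) * ‖u‖ ^ 2 := by
            have : (0:ℝ) < p := by linarith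
            have : (0:ℝ) < p - 1 := by linarith
            positivity
          exact mul_le_mul_of_nonneg_left hpow hc
      _ = p * g t ^ (q - 1 - 1) * ((p - 1) * (g t * ‖u‖ ^ 2)) := by
          rw [hsplit]; ring
      _ ≤ f2 t := by
          rw [hf2eq]
          apply mul_le_mul_of_nonneg_left hinner
          have : (0:ℝ) < g t ^ (q - 1 - 1) := Real.rpow_pos_of_pos hs _
          have hp0 : (0:ℝ) < p := by linarith
          positivity
  -- Taylor-type argument via monotonicity
  set h1 : ℝ → ℝ := fun t => f1 t - f1 0 - C * t with hh1def
  have hh1d : ∀ t, HasDerivAt h1 (f2 t - C) t := by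
    intro t
    have := ((hf1d t).sub_const (f1 0)).sub ((hasDerivAt_id t).const_mul C)
    exact this.congr_deriv (by ring)
  have hh1mono : MonotoneOn h1 (Set.Icc (0:ℝ) 1) := by
    apply monotoneOn_of_deriv_nonneg (convex_Icc 0 1)
    · exact fun t _ => ((hh1d t).differentiableAt).continuousAt.continuousWithinAt
    · intro t ht
      exact ((hh1d t).differentiableAt).differentiableWithinAt
    · intro t ht
      rw [(hh1d t).deriv]
      have htmem : t ∈ Set.Icc (0:ℝ) 1 := by
        rw [interior_Icc] at ht; exact ⟨ht.1.le, ht.2.le⟩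
      linarith [key t htmem]
  have hh1nonneg : ∀ t ∈ Set.Icc (0:ℝ) 1, 0 ≤ h1 t := by
    intro t ht
    have h0 : h1 0 = 0 := by simp [hh1def]
    have := hh1mono (Set.left_mem_Icc.mpr zero_le_one) ht ht.1
    rw [h0] at this
    exact this
  set h : ℝ → ℝ := fun t => f t - f 0 - f1 0 * t - C * t ^ 2 / 2 with hhdef
  have hhd : ∀ t, HasDerivAt h (h1 t) t := by
    intro t
    have h2 : HasDerivAt (fun t : ℝ => f1 0 * t) (f1 0) t := by
      simpa using (hasDerivAt_id t).const_mul (f1 0)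
    have h3 : HasDerivAt (fun t : ℝ => C * t ^ 2 / 2) (C * t) t := by
      have := ((hasDerivAt_pow 2 t).const_mul C).div_const 2
      exact this.congr_deriv (by push_cast; ring)
    exact (((hfd t).sub_const (f 0)).sub h2).sub h3
  have hhmono : MonotoneOn h (Set.Icc (0:ℝ) 1) := by
    apply monotoneOn_of_deriv_nonneg (convex_Icc 0 1)
    · exact fun t _ => ((hhd t).differentiableAt).continuousAt.continuousWithinAt
    · intro t ht
      exact ((hhd t).differentiableAt).differentiableWithinAt
    · intro t ht
      rw [(hhd t).deriv]
      have htmem : t ∈ Set.Icc (0:ℝ) 1 := by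
        rw [interior_Icc] at ht; exact ⟨ht.1.le, ht.2.le⟩
      exact hh1nonneg t htmem
  have hfinal : 0 ≤ h 1 := by
    have h0 : h 0 = 0 := by simp [hhdef]
    have := hhmono (Set.left_mem_Icc.mpr zero_le_one) (Set.right_mem_Icc.mpr zero_le_one)
      zero_le_one
    rw [h0] at this
    exact this
  -- translate back
  have hg1 : g 1 = ‖x + u‖ ^ 2 + ε ^ 2 := by rw [hgform 1, one_smul]
  have hg0 : g 0 = ‖x‖ ^ 2 + ε ^ 2 := by
    rw [hgform 0, zero_smul, add_zero]
  have hA1 : (0:ℝ) < ‖x + u‖ ^ 2 + ε ^ 2 := by positivity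
  have hA0 : (0:ℝ) < ‖x‖ ^ 2 + ε ^ 2 := by positivity
  have hsq1 : Real.sqrt (‖x + u‖ ^ 2 + ε ^ 2) ^ p = f 1 := by
    simp only [hfdef, hg1, Real.sqrt_eq_rpow]
    rw [← Real.rpow_mul hA1.le]
    congr 1
    rw [hq]; ring
  have hsq0 : Real.sqrt (‖x‖ ^ 2 + ε ^ 2) ^ p = f 0 := by
    simp only [hfdef, hg0, Real.sqrt_eq_rpow]
    rw [← Real.rpow_mul hA0.le]
    congr 1
    rw [hq]; ring
  have hsqd : p * Real.sqrt (‖x‖ ^ 2 + ε ^ 2) ^ (p - 2) * ⟪x, u⟫ = f1 0 := by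
    have hexp : Real.sqrt (‖x‖ ^ 2 + ε ^ 2) ^ (p - 2) = g 0 ^ (q - 1) := by
      rw [hg0, Real.sqrt_eq_rpow, ← Real.rpow_mul hA0.le]
      congr 1
      rw [hq]; ring
    simp only [hf1def, hexp]
    ring
  have hLHS : p * (p - 1) / 2 * ‖u‖ ^ 2 *
      ((max ‖x‖ ‖x + u‖) ^ 2 + ε ^ 2) ^ ((p - 2) / 2) = C / 2 := by
    rw [hCdef, ← hM]
    have : (p - 2) / 2 = q - 1 := by rw [hq]; ring
    rw [this]
    ring
  rw [hLHS, hsq1, hsq0, hsqd]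
  have heq : h 1 = f 1 - f 0 - f1 0 - C / 2 := by
    simp only [hhdef, mul_one, one_pow]
  rw [heq] at hfinal
  linarith
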